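/- Let F_q be a finite field with odd characteristic p and let f be a permutation polynomial of F_q with Carlitz rank Crk(f) = 1. Then ω(f) ∈ {1, 2, q − q/p, q − q/p − 1}. -/

import Mathlib

open Polynomial

noncomputable def carlitzChain {F : Type*} [Field F] (q : ℕ) (a : ℕ → F) : ℕ → F[X]
  | 0 => C (a 0) * X + C (a 1)
  | n + 1 => carlitzChain q a n ^ (q - 2) + C (a (n + 2))

/-- `f` is congruent mod `X^q - X` to a Carlitz chain of length `n`. -/
def IsCarlitzRep {F : Type*} [Field F] (q : ℕ) (f : F[X]) (n : ℕ) : Prop :=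
  ∃ a : ℕ → F, a 0 ≠ 0 ∧ (∀ i, 2 ≤ i → i ≤ n → a i ≠ 0) ∧
    (X ^ q - X : F[X]) ∣ f - carlitzChain q a n

/-- The Carlitz rank of a permutation polynomial. -/
noncomputable def carlitzRank {F : Type*} [Field F] (q : ℕ) (f : F[X]) : ℕ :=
  sInf {n | IsCarlitzRep q f n}

/-- The weight: number of nonzero coefficients of the reduction of `f` mod `X^q - X`. -/
noncomputable def polyWeight {F : Type*} [Field F] (q : ℕ) (f : F[X]) : ℕ :=
  (f %ₘ (X ^ q - X)).support.card

/-- `ν_p` from the paper. -/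
noncomputable def nuP (p : ℕ) [Fact p.Prime] : ℕ :=
  Finset.sup (Finset.univ.erase (1 : ZMod p)) fun γ =>
    ((Finset.Icc 1 (p - 2)).filter
      (fun i : ℕ => γ ^ (i + 1) = (i : ZMod p) * (1 - γ) + 1)).card

section Aux
variable {F : Type*} [Field F]




lemma key_sum_coeff (N : ℕ) (e : ℕ → F) (j : ℕ) :
    (∑ k ∈ Finset.range N, C (e k) * X ^ k).coeff j = if j < N then e j else 0 := by
  simp [finset_sum_coeff, coeff_C_mul, coeff_X_pow, eq_comm]

lemma key_identity (q : ℕ) (hq3 : 3 ≤ q) (hqodd : Odd q) (hq0 : (q : F) = 0)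
    (a₀ a₁ : F) (ha₀ : a₀ ≠ 0)
    (hfrob : (C a₀ * X + C a₁) ^ q = C (a₀ ^ q) * X ^ q + C (a₁ ^ q)) :
    (C a₀ * X + C a₁) ^ (q - 2) =
      ∑ k ∈ Finset.range (q - 1), C ((-1) ^ k * ((k + 1 : ℕ) : F) * a₀ ^ k * a₁ ^ (q - 2 - k)) * X ^ k := by
  set B : F[X] := C a₀ * X + C a₁ with hB
  set S : F[X] := ∑ k ∈ Finset.range (q - 1), C ((-1) ^ k * ((k + 1 : ℕ) : F) * a₀ ^ k * a₁ ^ (q - 2 - k)) * X ^ k with hS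
  have hBne : B ≠ 0 := by
    intro h
    have : B.coeff 1 = a₀ := by simp [hB, coeff_X, coeff_C]
    rw [h] at this
    simp at this
    exact ha₀ this.symm
  apply mul_right_cancel₀ (pow_ne_zero 2 hBne)
  rw [← pow_add, Nat.sub_add_cancel (by omega), hfrob]
  have hexp : S * B ^ 2 = C (a₁ ^ 2) * S + C (2 * a₀ * a₁) * (S * X ^ 1) + C (a₀ ^ 2) * (S * X ^ 2) := by
    simp only [hB, map_mul, map_pow, map_ofNat]
    ring
  rw [hexp]
  have hcs : ∀ j, S.coeff j = if j < q - 1 then (-1) ^ j * ((j + 1 : ℕ) : F) * a₀ ^ j * a₁ ^ (q - 2 - j) else 0 :=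
    fun j => key_sum_coeff _ _ j
  have hL : ∀ j, (C (a₀ ^ q) * X ^ q + C (a₁ ^ q)).coeff j
      = (if j = q then a₀ ^ q else 0) + (if j = 0 then a₁ ^ q else 0) := by
    intro j
    rw [coeff_add, coeff_C_mul, coeff_X_pow, coeff_C]
    split_ifs <;> ring
  ext j
  rw [hL]
  simp only [coeff_add, coeff_C_mul, coeff_mul_X_pow', hcs]
  rcases eq_or_ne j 0 with rfl | h0
  -- j = 0
  · rw [if_neg (show ¬(0 = q) by omega), if_pos rfl, if_pos (show 0 < q - 1 by omega),
      if_neg (show ¬(1:ℕ) ≤ 0 by omega), if_neg (show ¬(2:ℕ) ≤ 0 by omega)]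
    rw [show q - 2 - 0 = q - 2 by omega, show a₁ ^ 2 * ((-1)^0 * ((0+1:ℕ):F) * a₀^0 * a₁^(q-2)) = a₁^(2+(q-2)) by push_cast; ring, show 2 + (q-2) = q by omega]
    ring
  rcases eq_or_ne j 1 with rfl | h1
  -- j = 1
  · rw [if_neg (show ¬(1 = q) by omega), if_neg h0, if_pos (show 1 < q - 1 by omega),
      if_pos (le_refl 1), if_pos (show 1 - 1 < q - 1 by omega), if_neg (show ¬(2:ℕ) ≤ 1 by omega)]
    rw [show (1:ℕ) - 1 = 0 by omega, show q - 2 - 0 = (q - 2 - 1) + 1 by omega, show q - 2 - 1 = q - 3 by omega]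
    push_cast
    ring
  rcases lt_or_ge j (q - 1) with hjlt | hjge
  -- 2 ≤ j ≤ q - 2 : generic vanishing case
  · obtain ⟨i, rfl⟩ : ∃ i, j = i + 2 := ⟨j - 2, by omega⟩
    rw [if_neg (show ¬(i + 2 = q) by omega), if_neg h0, if_pos hjlt,
      if_pos (show 1 ≤ i + 2 by omega), if_pos (show i + 2 - 1 < q - 1 by omega),
      if_pos (show 2 ≤ i + 2 by omega), if_pos (show i + 2 - 2 < q - 1 by omega)]
    rw [show i + 2 - 1 = i + 1 by omega, show i + 2 - 2 = i by omega,
      show q - 2 - (i + 2) = q - 4 - i by omega, show q - 2 - (i+1) = (q - 4 - i) + 1 by omega,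
      show q - 2 - i = (q - 4 - i) + 2 by omega]
    push_cast
    ring
  rcases eq_or_ne j (q - 1) with rfl | hq1
  -- j = q - 1
  · rw [if_neg (show ¬(q - 1 = q) by omega), if_neg (show ¬(q-1 = 0) by omega),
      if_neg (show ¬(q - 1 < q - 1) by omega),
      if_pos (show 1 ≤ q - 1 by omega), if_pos (show q - 1 - 1 < q - 1 by omega),
      if_pos (show 2 ≤ q - 1 by omega), if_pos (show q - 1 - 2 < q - 1 by omega)]
    rw [show q - 1 - 1 = q - 2 by omega, show q - 1 - 2 = q - 3 by omega,
      show q - 2 - (q - 2) = 0 by omega, show q - 2 - (q - 3) = 1 by omega]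
    have e1 : ((q - 2 + 1 : ℕ) : F) = -1 := by
      rw [show q - 2 + 1 = q - 1 by omega, Nat.cast_sub (by omega), hq0]; push_cast; ring
    have e2 : ((q - 3 + 1 : ℕ) : F) = -2 := by
      rw [show q - 3 + 1 = q - 2 by omega, Nat.cast_sub (by omega), hq0]; push_cast; ring
    have e3 : ((-1 : F)) ^ (q - 2) = -1 := by
      apply Odd.neg_one_pow
      rcases hqodd with ⟨m, rfl⟩; exact ⟨m - 1, by omega⟩
    have e4 : ((-1 : F)) ^ (q - 3) = 1 := by
      apply Even.neg_one_pow
      rcases hqodd with ⟨m, rfl⟩; exact ⟨m - 1, by omega⟩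
    rw [e1, e2, e3, e4, show q - 2 = (q - 3) + 1 by omega]
    push_cast
    ring
  rcases eq_or_ne j q with hjq | hq2
  -- j = q
  · have hq3' : 3 ≤ j := by omega
    have hq0' : (j : F) = 0 := by rw [hjq]; exact hq0
    have hqodd' : Odd j := hjq ▸ hqodd
    rw [hjq] at *
    rw [if_neg (show ¬(q = 0) by omega), if_neg (show ¬(q < q - 1) by omega),
      if_pos (show 1 ≤ q by omega), if_neg (show ¬(q - 1 < q - 1) by omega),
      if_pos (show 2 ≤ q by omega), if_pos (show q - 2 < q - 1 by omega)]
    have e1 : ((q - 2 + 1 : ℕ) : F) = -1 := by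
      rw [show q - 2 + 1 = q - 1 by omega, Nat.cast_sub (by omega), hq0]; push_cast; ring
    have e3 : ((-1 : F)) ^ (q - 2) = -1 := by
      apply Odd.neg_one_pow
      rcases hqodd with ⟨m, rfl⟩; exact ⟨m - 1, by omega⟩
    rw [e1, e3, show q - 2 - (q - 2) = 0 by omega,
      show a₀ ^ q = a₀ ^ (2 + (q - 2)) by rw [show 2 + (q-2) = q by omega]]
    push_cast
    ring_nf
    simp
  -- j > q
  · rw [if_neg hq2, if_neg h0, if_neg (show ¬(j < q - 1) by omega),
      if_neg (show ¬(j - 1 < q - 1) by omega), if_neg (show ¬(j - 2 < q - 1) by omega)]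
    simp


lemma mod_eq_of_dvd_sub {M g f : F[X]} (hM : M.Monic) (hdvd : M ∣ f - g)
    (hdeg : g.degree < M.degree) : f %ₘ M = g := by
  have h0 : (f - g) %ₘ M = 0 := (modByMonic_eq_zero_iff_dvd hM).mpr hdvd
  have : f %ₘ M = (f - g) %ₘ M + g %ₘ M := by
    rw [← add_modByMonic, sub_add_cancel]
  rw [this, h0, zero_add, (modByMonic_eq_self_iff hM).mpr hdeg]

lemma monic_XqX (q : ℕ) (hq3 : 3 ≤ q) : (X ^ q - X : F[X]).Monic := by
  apply monic_X_pow_sub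
  rw [degree_X]
  exact_mod_cast (show (1:ℕ) < q by omega)

lemma degree_XqX (q : ℕ) (hq3 : 3 ≤ q) : (X ^ q - X : F[X]).degree = q := by
  rw [degree_sub_eq_left_of_degree_lt, degree_X_pow]
  rw [degree_X_pow, degree_X]
  exact_mod_cast (show (1:ℕ) < q by omega)

lemma count_lemma (p q : ℕ) (hp : p.Prime) (hpq : p ∣ q) (hq3 : 3 ≤ q) :
    ((Finset.Ico 1 (q - 1)).filter (fun j => ¬ p ∣ (j + 1))).card = q - 1 - q / p := by
  obtain ⟨m, rfl⟩ := hpq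
  have hp2 : 2 ≤ p := hp.two_le
  have hm1 : 1 ≤ m := Nat.one_le_iff_ne_zero.mpr (by rintro rfl; omega)
  have key1 : (m - 1) * p ≤ p * m - 1 ∧ p * m - 1 < (m - 1 + 1) * p := by
    obtain ⟨k, rfl⟩ : ∃ k, m = k + 1 := ⟨m - 1, by omega⟩
    simp only [Nat.add_sub_cancel]
    have h2 : p * (k + 1) = k * p + p := by ring
    have h4 : (k + 1) * p = k * p + p := by ring
    omega
  have hdivq : p * m / p = m := Nat.mul_div_cancel_left m (by omega)
  have hcard : ((Finset.Ico 1 (p * m - 1)).filter (fun j => p ∣ (j + 1))).card = m - 1 := by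
    rw [Finset.card_nbij' (fun j => j + 1) (fun x => x - 1)
      (t := (Finset.Ioc 0 (p * m - 1)).filter (fun x => p ∣ x))]
    · rw [Nat.Ioc_filter_dvd_card_eq_div]
      exact Nat.div_eq_of_lt_le key1.1 key1.2
    · intro a ha
      simp only [Finset.mem_coe, Finset.mem_filter, Finset.mem_Ico] at ha
      simp only [Finset.mem_coe, Finset.mem_filter, Finset.mem_Ioc]
      exact ⟨⟨by omega, by omega⟩, ha.2⟩
    · intro x hx
      simp only [Finset.mem_coe, Finset.mem_filter, Finset.mem_Ioc] at hx
      have hxp : p ≤ x := Nat.le_of_dvd (by omega) hx.2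
      simp only [Finset.mem_coe, Finset.mem_filter, Finset.mem_Ico]
      refine ⟨⟨by omega, by omega⟩, ?_⟩
      rw [Nat.sub_add_cancel (by omega)]; exact hx.2
    · intro a ha; dsimp only; omega
    · intro x hx
      simp only [Finset.mem_coe, Finset.mem_filter, Finset.mem_Ioc] at hx
      have hxp : p ≤ x := Nat.le_of_dvd (by omega) hx.2
      dsimp only; omega
  have := Finset.card_filter_add_card_filter_not
    (s := Finset.Ico 1 (p * m - 1)) (p := fun j => p ∣ (j + 1))
  rw [Nat.card_Ico] at this
  omega


end Aux

/-- **Proposition.** Let `F` be a finite field with odd characteristic `p` and `q` elements,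
and let `f` be a permutation polynomial of `F` with Carlitz rank 1. Then
`ω(f) ∈ {1, 2, q - q/p, q - q/p - 1}`. -/
theorem weight_of_carlitzRank_one {p : ℕ} [Fact p.Prime] (hp : Odd p)
    {F : Type*} [Field F] [Fintype F] [CharP F p] (f : F[X])
    (hperm : Function.Bijective fun x : F => f.eval x)
    (hrank : carlitzRank (Fintype.card F) f = 1) :
    polyWeight (Fintype.card F) f ∈
      ({1, 2, Fintype.card F - Fintype.card F / p,
        Fintype.card F - Fintype.card F / p - 1} : Set ℕ) := by
  classical
  have hpp : p.Prime := Fact.out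
  set q := Fintype.card F with hqdef
  obtain ⟨n, -, hq⟩ := FiniteField.card F p
  rw [← hqdef] at hq
  have hp3 : 3 ≤ p := by
    rcases hp with ⟨k, hk⟩
    have := hpp.two_le
    omega
  have hq3 : 3 ≤ q := le_trans hp3 (by rw [hq]; exact Nat.le_self_pow n.pos.ne' p)
  have hqodd : Odd q := by rw [hq]; exact hp.pow
  have hpq : p ∣ q := by rw [hq]; exact dvd_pow_self p n.pos.ne'
  have hq0 : ((q : ℕ) : F) = 0 := (CharP.cast_eq_zero_iff F p q).mpr hpq
  obtain ⟨m, hm⟩ := hpq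
  have hm1 : 1 ≤ m := by
    rcases Nat.eq_zero_or_pos m with rfl | h
    · omega
    · exact h
  have hdivq : q / p = m := by rw [hm]; exact Nat.mul_div_cancel_left m (by omega)
  have hmq : m + 1 ≤ q := by nlinarith
  -- extract the representation
  have hne : {k | IsCarlitzRep q f k}.Nonempty := by
    by_contra h
    rw [Set.not_nonempty_iff_eq_empty] at h
    rw [carlitzRank, h] at hrank
    simp [Nat.sInf_empty] at hrank
  have hrep : IsCarlitzRep q f 1 := by
    have h := Nat.sInf_mem hne
    rw [show sInf {k | IsCarlitzRep q f k} = carlitzRank q f from rfl, hrank] at h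
    exact h
  obtain ⟨a, ha0, -, hdvd⟩ := hrep
  have hchain : carlitzChain q a 1 = (C (a 0) * X + C (a 1)) ^ (q - 2) + C (a 2) := rfl
  have hw : polyWeight q f = (f %ₘ (X ^ q - X)).support.card := rfl
  by_cases ha1 : a 1 = 0
  · -- small weight case
    have hchain' : carlitzChain q a 1 = C (a 0 ^ (q - 2)) * X ^ (q - 2) + C (a 2) := by
      rw [hchain, ha1, map_zero, add_zero, mul_pow, ← C_pow]
    have hmod : f %ₘ (X ^ q - X) = C (a 0 ^ (q - 2)) * X ^ (q - 2) + C (a 2) := by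
      apply _root_.mod_eq_of_dvd_sub (monic_XqX q hq3)
      · rw [← hchain']; exact hdvd
      · rw [degree_XqX q hq3]
        apply lt_of_le_of_lt (degree_add_le _ _)
        rw [max_lt_iff]
        constructor
        · apply lt_of_le_of_lt (degree_C_mul_X_pow_le _ _)
          exact_mod_cast (show q - 2 < q by omega)
        · apply lt_of_le_of_lt degree_C_le
          exact_mod_cast (show (0:ℕ) < q by omega)
    rw [hw, hmod]
    by_cases ha2 : a 2 = 0
    · rw [ha2, map_zero, add_zero, C_mul_X_pow_eq_monomial,
        support_monomial _ (pow_ne_zero _ ha0), Finset.card_singleton]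
      left; rfl
    · rw [show (C (a 2) : F[X]) = C (a 2) * X ^ 0 by simp,
        support_binomial (show q - 2 ≠ 0 by omega) (pow_ne_zero _ ha0) ha2]
      rw [Finset.card_insert_of_notMem (by simp; omega), Finset.card_singleton]
      right; left; rfl
  · -- big weight case
    have hfrob : (C (a 0) * X + C (a 1)) ^ q = C (a 0 ^ q) * X ^ q + C (a 1 ^ q) := by
      rw [hq, add_pow_char_pow, mul_pow, ← C_pow, ← C_pow]
    have hid := key_identity q hq3 hqodd hq0 (a 0) (a 1) ha0 hfrob
    set e : ℕ → F := fun k => (-1) ^ k * ((k + 1 : ℕ) : F) * (a 0) ^ k * (a 1) ^ (q - 2 - k) with he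
    set g : F[X] := (∑ k ∈ Finset.range (q - 1), C (e k) * X ^ k) + C (a 2) with hg
    have hgc : ∀ j, g.coeff j = (if j < q - 1 then e j else 0) + (if j = 0 then a 2 else 0) := by
      intro j
      rw [hg, coeff_add, key_sum_coeff, coeff_C]
    have hmod : f %ₘ (X ^ q - X) = g := by
      apply _root_.mod_eq_of_dvd_sub (monic_XqX q hq3)
      · have : carlitzChain q a 1 = g := by rw [hchain, hid, hg]
        rw [← this]; exact hdvd
      · rw [degree_XqX q hq3]
        rw [degree_lt_iff_coeff_zero]
        intro j hj
        have : q ≤ j := hj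
        rw [hgc, if_neg (by omega), if_neg (by omega), add_zero]
    have hsupp : g.support = (Finset.range (q - 1)).filter (fun j => g.coeff j ≠ 0) := by
      ext x
      simp only [mem_support_iff, Finset.mem_filter, Finset.mem_range]
      constructor
      · intro h
        refine ⟨?_, h⟩
        by_contra hx
        apply h
        rw [hgc, if_neg (by omega), if_neg (by omega), add_zero]
      · exact fun h => h.2
    rw [hw, hmod, hsupp]
    have hsplit : Finset.range (q - 1) = insert 0 (Finset.Ico 1 (q - 1)) := by
      ext x; simp; omega
    rw [hsplit, Finset.filter_insert]
    have hfc : (Finset.Ico 1 (q - 1)).filter (fun j => g.coeff j ≠ 0)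
        = (Finset.Ico 1 (q - 1)).filter (fun j => ¬ p ∣ (j + 1)) := by
      apply Finset.filter_congr
      intro j hj
      simp only [Finset.mem_Ico] at hj
      rw [hgc, if_pos hj.2, if_neg (by omega), add_zero]
      have heq : e j = 0 ↔ ((j + 1 : ℕ) : F) = 0 := by
        simp [he, mul_eq_zero, pow_eq_zero_iff, ha0, ha1]
      exact not_congr (heq.trans (CharP.cast_eq_zero_iff F p (j + 1)))
    rw [hfc]
    have hcount := count_lemma p q hpp ⟨m, hm⟩ hq3
    by_cases hc : g.coeff 0 ≠ 0
    · rw [if_pos hc, Finset.card_insert_of_notMem (by simp), hcount, hdivq]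
      simp only [Set.mem_insert_iff, Set.mem_singleton_iff]
      omega
    · rw [if_neg hc, hcount, hdivq]
      simp only [Set.mem_insert_iff, Set.mem_singleton_iff]
      omega
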